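/- For every undirected finite graph G and every integer k ≥ 1, there is a vertex k-colouring of G such that every vertex v has at most deg(v)/k neighbours receiving the same colour as v. -/

import Mathlib

open Finset

/-- Lovász: for every finite graph G and k ≥ 1 there is a k-colouring such that
every vertex v has at most deg(v)/k neighbours of its own colour. -/
theorem lovasz_defective_colouring
    {V : Type*} [Fintype V] [DecidableEq V]
    (G : SimpleGraph V) [DecidableRel G.Adj] (k : ℕ) (hk : 1 ≤ k) :
    ∃ f : V → Fin k, ∀ v : V,
      k * ((G.neighborFinset v).filter (fun w => f w = f v)).card ≤ G.degree v := by
  classical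
  haveI : Nonempty (Fin k) := ⟨⟨0, hk⟩⟩
  set D : (V → Fin k) → V → V → ℕ :=
    fun f u w => if G.Adj u w ∧ f u = f w then 1 else 0 with hD
  set cost : (V → Fin k) → ℕ := fun f => ∑ u : V, ∑ w : V, D f u w with hcost
  obtain ⟨f, -, hf⟩ := Finset.exists_min_image (Finset.univ : Finset (V → Fin k)) cost
    ⟨Classical.arbitrary _, Finset.mem_univ _⟩
  -- rows of the matrix D count same-coloured neighbours
  have row : ∀ (f : V → Fin k) (v : V) (c : Fin k),
      (∑ w : V, if G.Adj v w ∧ c = f w then 1 else 0)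
        = ((G.neighborFinset v).filter (fun w => f w = c)).card := by
    intro f v c
    rw [Finset.card_filter, SimpleGraph.neighborFinset_eq_filter, Finset.sum_filter]
    refine Finset.sum_congr rfl fun w _ => ?_
    by_cases h1 : G.Adj v w <;> by_cases h2 : f w = c <;>
      simp [h1, h2]
    exact fun h => h2 h.symm
  refine ⟨f, fun v => ?_⟩
  by_contra hcon
  push_neg at hcon
  set m := ((G.neighborFinset v).filter (fun w => f w = f v)).card with hm
  -- degree is the sum over colours of colour counts among the neighbours
  have hdeg : G.degree v
      = ∑ c : Fin k, ((G.neighborFinset v).filter (fun w => f w = c)).card := by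
    rw [SimpleGraph.degree]
    exact Finset.card_eq_sum_card_fiberwise (fun x _ => Finset.mem_univ (f x))
  -- pigeonhole: some colour is used by fewer than m neighbours
  have hexc : ∃ c : Fin k, ((G.neighborFinset v).filter (fun w => f w = c)).card < m := by
    by_contra hcn
    push_neg at hcn
    have hge : (k : ℕ) * m ≤ G.degree v := by
      rw [hdeg]
      calc k * m = ∑ _c : Fin k, m := by simp [mul_comm]
        _ ≤ _ := Finset.sum_le_sum fun c _ => hcn c
    omega
  obtain ⟨c, hc⟩ := hexc
  set g : V → Fin k := Function.update f v c with hg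
  have hgv : g v = c := Function.update_self v c f
  have hgw : ∀ w : V, w ≠ v → g w = f w := fun w hw => Function.update_of_ne hw c f
  -- decomposition of the cost into: row v, column v (off-diagonal), and the rest
  have decomp : ∀ h : V → Fin k,
      cost h = (∑ w : V, D h v w) + (∑ u ∈ univ.erase v, D h u v)
        + ∑ u ∈ univ.erase v, ∑ w ∈ univ.erase v, D h u w := by
    intro h
    have e1 : ∀ u : V, (∑ w : V, D h u w) = D h u v + ∑ w ∈ univ.erase v, D h u w :=
      fun u => (Finset.add_sum_erase _ _ (Finset.mem_univ v)).symm
    calc cost h = (∑ w : V, D h v w) + ∑ u ∈ univ.erase v, ∑ w : V, D h u w := by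
          rw [hcost]
          exact (Finset.add_sum_erase _ _ (Finset.mem_univ v)).symm
      _ = _ := by
          rw [Finset.sum_congr rfl fun u _ => e1 u, Finset.sum_add_distrib]
          ring
  -- evaluate the pieces for f
  have rowf : (∑ w : V, D f v w) = m := by
    rw [hm, ← row f v (f v)]
  have colf : (∑ u ∈ univ.erase v, D f u v) = m := by
    have hzero : D f v v = 0 := by simp [hD]
    have he : (∑ u ∈ univ.erase v, D f u v) = ∑ u : V, D f u v :=
      Finset.sum_erase _ hzero
    rw [he, hm, ← row f v (f v)]
    refine Finset.sum_congr rfl fun u _ => ?_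
    rcases Decidable.em (G.Adj u v) with h1 | h1
    · have h1' : G.Adj v u := h1.symm
      by_cases h2 : f u = f v
      · simp [hD, h1, h1', h2]
      · have h2' : ¬ f v = f u := fun h => h2 h.symm
        simp [hD, h1, h2, h1', h2']
    · have h1' : ¬ G.Adj v u := fun h => h1 h.symm
      simp [hD, h1, h1']
  -- evaluate the pieces for g
  have rowg : (∑ w : V, D g v w)
      = ((G.neighborFinset v).filter (fun w => f w = c)).card := by
    rw [← row f v c]
    refine Finset.sum_congr rfl fun w _ => ?_
    by_cases h1 : G.Adj v w
    · have hwv : w ≠ v := fun h => G.loopless.irrefl v (h ▸ h1)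
      simp [hD, h1, hgv, hgw w hwv]
    · simp [hD, h1]
  have colg : (∑ u ∈ univ.erase v, D g u v)
      = ((G.neighborFinset v).filter (fun w => f w = c)).card := by
    have hzero : D g v v = 0 := by simp [hD]
    have he : (∑ u ∈ univ.erase v, D g u v) = ∑ u : V, D g u v :=
      Finset.sum_erase _ hzero
    rw [he, ← row f v c]
    refine Finset.sum_congr rfl fun u _ => ?_
    by_cases h1 : G.Adj u v
    · have huv : u ≠ v := G.ne_of_adj h1
      have h1' : G.Adj v u := h1.symm
      simp [hD, h1, h1', hgv, hgw u huv, eq_comm]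
    · have h1' : ¬ G.Adj v u := fun h => h1 h.symm
      simp [hD, h1, h1']
  have rest : (∑ u ∈ univ.erase v, ∑ w ∈ univ.erase v, D g u w)
      = ∑ u ∈ univ.erase v, ∑ w ∈ univ.erase v, D f u w := by
    refine Finset.sum_congr rfl fun u hu => Finset.sum_congr rfl fun w hw => ?_
    rw [hD]
    simp only [hgw u (Finset.ne_of_mem_erase hu), hgw w (Finset.ne_of_mem_erase hw)]
  have hlt : cost g < cost f := by
    rw [decomp f, decomp g, rowf, colf, rowg, colg, rest]
    omega
  exact absurd (hf g (Finset.mem_univ g)) (not_le.mpr hlt)
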